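/- Let Ω be the open unit disk in ℝ² ≅ ℂ and let γ ∈ L²(Ω). For all integers i, j ≥ 1, the following integral identities hold: ∫_Ω γ(z) ⟨∇Re(z^i), ∇Re(z^j)⟩ dz = ∫_Ω γ(z) ⟨∇Im(z^i), ∇Im(z^j)⟩ dz = i·j·π·ζ_{i,j} ∫₀¹ r^{i+j−1} a_{|i−j|}(r) dr, where ζ_{i,j} = 2 if i = j and ζ_{i,j} = 1 otherwise. -/

import Mathlib

open MeasureTheory Real Filter
open scoped RealInnerProductSpace

/-- Angular Fourier cosine coefficient `a_k(r)` of a function `γ` on the unit disk: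
`a_0(r) = (1/(2π)) ∫₀^{2π} γ(r e^{iφ}) dφ` and for `k ≥ 1`,
`a_k(r) = (1/π) ∫₀^{2π} γ(r e^{iφ}) cos(kφ) dφ`. -/
noncomputable def fourierCosCoeff (γ : ℂ → ℝ) (k : ℕ) (r : ℝ) : ℝ :=
  if k = 0 then
    (1 / (2 * π)) * ∫ φ in (0:ℝ)..(2 * π), γ ((r : ℂ) * Complex.exp (Complex.I * (φ : ℂ)))
  else
    (1 / π) * ∫ φ in (0:ℝ)..(2 * π),
      γ ((r : ℂ) * Complex.exp (Complex.I * (φ : ℂ))) * Real.cos (k * φ)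


open Set

lemma hasGradientAt_re_pow (n : ℕ) (z : ℂ) :
    HasGradientAt (fun w : ℂ => (w ^ n).re) ((starRingEnd ℂ) ((n : ℂ) * z ^ (n - 1))) z := by
  rw [hasGradientAt_iff_hasFDerivAt]
  have hd : HasFDerivAt (fun w : ℂ => w ^ n)
      ((1 : ℂ →L[ℂ] ℂ).smulRight ((n : ℂ) * z ^ (n - 1))) z :=
    (hasDerivAt_pow n z).hasFDerivAt
  have h2 : HasFDerivAt (fun w : ℂ => (w ^ n).re) (Complex.reCLM.comp
      (((1 : ℂ →L[ℂ] ℂ).smulRight ((n : ℂ) * z ^ (n - 1))).restrictScalars ℝ)) z :=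
    (Complex.reCLM.hasFDerivAt (x := z ^ n)).comp z (hd.restrictScalars ℝ)
  refine h2.congr_fderiv ?_
  ext v
  simp [InnerProductSpace.toDual_apply_apply, Complex.inner, mul_comm]

lemma hasGradientAt_im_pow (n : ℕ) (z : ℂ) :
    HasGradientAt (fun w : ℂ => (w ^ n).im)
      (Complex.I * (starRingEnd ℂ) ((n : ℂ) * z ^ (n - 1))) z := by
  rw [hasGradientAt_iff_hasFDerivAt]
  have hd : HasFDerivAt (fun w : ℂ => w ^ n)
      ((1 : ℂ →L[ℂ] ℂ).smulRight ((n : ℂ) * z ^ (n - 1))) z :=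
    (hasDerivAt_pow n z).hasFDerivAt
  have h2 : HasFDerivAt (fun w : ℂ => (w ^ n).im) (Complex.imCLM.comp
      (((1 : ℂ →L[ℂ] ℂ).smulRight ((n : ℂ) * z ^ (n - 1))).restrictScalars ℝ)) z :=
    (Complex.imCLM.hasFDerivAt (x := z ^ n)).comp z (hd.restrictScalars ℝ)
  refine h2.congr_fderiv ?_
  ext v
  simp only [InnerProductSpace.toDual_apply_apply, Complex.inner, map_mul, Complex.conj_I,
    Complex.conj_conj, ContinuousLinearMap.coe_comp', Function.comp_apply,
    ContinuousLinearMap.coe_restrictScalars', ContinuousLinearMap.smulRight_apply,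
    ContinuousLinearMap.one_apply, Complex.imCLM_apply, smul_eq_mul]
  rw [show v * (-Complex.I * ((n : ℂ) * z ^ (n - 1)))
      = -(Complex.I * (v * ((n : ℂ) * z ^ (n - 1)))) by ring]
  simp [Complex.neg_re, Complex.mul_re, Complex.I_re, Complex.I_im]

lemma inner_conj_conj (a b : ℂ) :
    ⟪(starRingEnd ℂ) a, (starRingEnd ℂ) b⟫ = (a * (starRingEnd ℂ) b).re := by
  rw [Complex.inner, Complex.conj_conj]
  rw [mul_comm]

lemma inner_I_conj_I_conj (a b : ℂ) :
    ⟪Complex.I * (starRingEnd ℂ) a, Complex.I * (starRingEnd ℂ) b⟫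
      = (a * (starRingEnd ℂ) b).re := by
  rw [Complex.inner, map_mul, Complex.conj_I, Complex.conj_conj]
  congr 1
  rw [show Complex.I * (starRingEnd ℂ) b * (-Complex.I * a)
      = -(Complex.I * Complex.I) * (a * (starRingEnd ℂ) b) by ring, Complex.I_mul_I]
  ring

lemma grad_re_inner (i j : ℕ) (z : ℂ) :
    ⟪gradient (fun w : ℂ => (w ^ i).re) z, gradient (fun w : ℂ => (w ^ j).re) z⟫
      = (i:ℝ) * (j:ℝ) * ((z ^ (i-1)) * ((starRingEnd ℂ) z) ^ (j-1)).re := by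
  rw [(hasGradientAt_re_pow i z).gradient, (hasGradientAt_re_pow j z).gradient,
    inner_conj_conj, map_mul (starRingEnd ℂ), map_natCast, map_pow,
    show ((i:ℂ) * z ^ (i-1) * ((j:ℂ) * ((starRingEnd ℂ) z) ^ (j-1)))
      = ((((i:ℝ) * (j:ℝ) : ℝ)) : ℂ) * (z ^ (i-1) * ((starRingEnd ℂ) z) ^ (j-1)) by
        push_cast; ring,
    Complex.re_ofReal_mul]

lemma grad_im_inner (i j : ℕ) (z : ℂ) :
    ⟪gradient (fun w : ℂ => (w ^ i).im) z, gradient (fun w : ℂ => (w ^ j).im) z⟫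
      = (i:ℝ) * (j:ℝ) * ((z ^ (i-1)) * ((starRingEnd ℂ) z) ^ (j-1)).re := by
  rw [(hasGradientAt_im_pow i z).gradient, (hasGradientAt_im_pow j z).gradient,
    inner_I_conj_I_conj, map_mul (starRingEnd ℂ), map_natCast, map_pow,
    show ((i:ℂ) * z ^ (i-1) * ((j:ℂ) * ((starRingEnd ℂ) z) ^ (j-1)))
      = ((((i:ℝ) * (j:ℝ) : ℝ)) : ℂ) * (z ^ (i-1) * ((starRingEnd ℂ) z) ^ (j-1)) by
        push_cast; ring,
    Complex.re_ofReal_mul]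


lemma integrableOn_polar_real {g : ℝ × ℝ → ℝ} (hg : Integrable g) :
    IntegrableOn (fun p : ℝ × ℝ => p.1 • g (polarCoord.symm p)) polarCoord.target := by
  set B : ℝ × ℝ → ℝ × ℝ →L[ℝ] ℝ × ℝ := fun p =>
    LinearMap.toContinuousLinearMap (Matrix.toLin (Module.Basis.finTwoProd ℝ) (Module.Basis.finTwoProd ℝ)
      !![Real.cos p.2, -p.1 * Real.sin p.2; Real.sin p.2, p.1 * Real.cos p.2])
  have hB : ∀ p ∈ polarCoord.target, HasFDerivWithinAt polarCoord.symm (B p) polarCoord.target p :=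
    fun p _ => (hasFDerivAt_polarCoord_symm p).hasFDerivWithinAt
  have B_det : ∀ p, (B p).det = p.1 := by
    intro p
    conv_rhs => rw [← one_mul p.1, ← Real.cos_sq_add_sin_sq p.2]
    simp only [B, neg_mul, LinearMap.det_toContinuousLinearMap, LinearMap.det_toLin,
      Matrix.det_fin_two_of, sub_neg_eq_add]
    ring
  have hinj : Set.InjOn polarCoord.symm polarCoord.target := polarCoord.symm.injOn
  have := (integrableOn_image_iff_integrableOn_abs_det_fderiv_smul volume
    polarCoord.open_target.measurableSet hB hinj g).1 hg.integrableOn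
  refine this.congr_fun (fun p hp => ?_) polarCoord.open_target.measurableSet
  simp only [B_det, abs_of_pos (Set.mem_Ioi.1 hp.1)]

lemma integrableOn_polar_complex {f : ℂ → ℝ} (hf : Integrable f) :
    IntegrableOn (fun p : ℝ × ℝ => p.1 • f (Complex.polarCoord.symm p)) polarCoord.target := by
  have hg : Integrable (f ∘ Complex.measurableEquivRealProd.symm) :=
    (((Complex.volume_preserving_equiv_real_prod.symm Complex.measurableEquivRealProd)).integrable_comp_emb
      Complex.measurableEquivRealProd.symm.measurableEmbedding).2 hf
  have h2 := integrableOn_polar_real hg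
  refine h2.congr_fun (fun p hp => ?_) polarCoord.open_target.measurableSet
  congr 1

lemma polar_pow_conj_pow (r θ : ℝ) (a b : ℕ) :
    ((((r : ℂ) * Complex.exp (Complex.I * θ)) ^ a) *
      ((starRingEnd ℂ) ((r : ℂ) * Complex.exp (Complex.I * θ))) ^ b).re
      = r ^ (a + b) * Real.cos (((a : ℝ) - b) * θ) := by
  have hconj : (starRingEnd ℂ) ((r : ℂ) * Complex.exp (Complex.I * θ))
      = (r : ℂ) * Complex.exp (-(Complex.I * θ)) := by
    rw [map_mul, Complex.conj_ofReal, ← Complex.exp_conj, map_mul, Complex.conj_I,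
      Complex.conj_ofReal, neg_mul]
  rw [hconj, mul_pow, mul_pow, ← Complex.exp_nat_mul, ← Complex.exp_nat_mul,
    show ((r:ℂ)^a * Complex.exp ((a:ℂ) * (Complex.I * θ)) * ((r:ℂ)^b * Complex.exp ((b:ℂ) * -(Complex.I * θ))))
      = (r:ℂ)^(a+b) * Complex.exp ((a:ℂ) * (Complex.I * θ) + (b:ℂ) * -(Complex.I * θ)) by
        rw [Complex.exp_add, pow_add]; ring]
  have : ((a:ℂ) * (Complex.I * θ) + (b:ℂ) * -(Complex.I * θ)) = (((a : ℝ) - b) * θ : ℝ) * Complex.I := by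
    push_cast; ring
  rw [this, ← Complex.ofReal_pow, Complex.re_ofReal_mul, Complex.exp_ofReal_mul_I_re]

lemma cos_sub_natAbs (i j : ℕ) (θ : ℝ) :
    Real.cos (((i : ℝ) - j) * θ) = Real.cos ((((i : ℤ) - j).natAbs : ℝ) * θ) := by
  have h : (((((i : ℤ) - j).natAbs : ℝ))) = |(i : ℝ) - j| := by
    rw [Nat.cast_natAbs]; push_cast; ring_nf
  rw [h]
  rcases abs_cases ((i : ℝ) - j) with ⟨h1, _⟩ | ⟨h1, _⟩
  · rw [h1]
  · rw [h1, neg_mul, Real.cos_neg]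


lemma main_core (γ : ℂ → ℝ)
    (hγ : MemLp γ 2 (volume.restrict (Metric.ball (0:ℂ) 1)))
    (i j : ℕ) (hi : 1 ≤ i) (hj : 1 ≤ j) :
    (∫ z in Metric.ball (0:ℂ) 1,
        γ z * ((i:ℝ) * (j:ℝ) * ((z ^ (i-1)) * ((starRingEnd ℂ) z) ^ (j-1)).re))
      = (i : ℝ) * j * π * (if i = j then 2 else 1) *
          ∫ r in (0:ℝ)..1, r ^ (i + j - 1) * fourierCosCoeff γ ((i : ℤ) - j).natAbs r := by
  set k : ℕ := ((i : ℤ) - j).natAbs with hkdef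
  set g : ℂ → ℝ := fun z => (i:ℝ) * (j:ℝ) * ((z ^ (i-1)) * ((starRingEnd ℂ) z) ^ (j-1)).re with hg
  -- integrability on the ball
  haveI : IsFiniteMeasure (volume.restrict (Metric.ball (0:ℂ) 1)) :=
    ⟨by rw [Measure.restrict_apply_univ]; exact measure_ball_lt_top⟩
  have hγint : Integrable γ (volume.restrict (Metric.ball (0:ℂ) 1)) := hγ.integrable one_le_two
  have hgcont : Continuous g := by
    apply continuous_const.mul
    exact Complex.continuous_re.comp ((continuous_pow (i-1)).mul
      ((Complex.continuous_conj).pow (j-1)))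
  have hbound : ∀ᵐ z ∂(volume.restrict (Metric.ball (0:ℂ) 1)), ‖g z‖ ≤ (i:ℝ) * j := by
    filter_upwards [ae_restrict_mem measurableSet_ball] with z hz
    have hz1 : ‖z‖ ≤ 1 := by
      rw [Metric.mem_ball, Complex.dist_eq, sub_zero] at hz; exact hz.le
    have h1 : ‖z ^ (i-1) * ((starRingEnd ℂ) z) ^ (j-1)‖ ≤ 1 := by
      rw [norm_mul, norm_pow, norm_pow, Complex.norm_conj]
      exact mul_le_one₀ (pow_le_one₀ (norm_nonneg z) hz1)
        (pow_nonneg (norm_nonneg z) _) (pow_le_one₀ (norm_nonneg z) hz1)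
    have h2 : |((z ^ (i-1)) * ((starRingEnd ℂ) z) ^ (j-1)).re| ≤ 1 :=
      le_trans (Complex.abs_re_le_norm _) h1
    have hij0 : (0:ℝ) ≤ (i:ℝ) * j := by positivity
    calc ‖g z‖ = (i:ℝ) * j * |((z ^ (i-1)) * ((starRingEnd ℂ) z) ^ (j-1)).re| := by
          rw [hg]; simp [Real.norm_eq_abs, abs_mul, abs_of_nonneg hij0]
      _ ≤ (i:ℝ) * j * 1 := by gcongr
      _ = (i:ℝ) * j := mul_one _
  have hint : Integrable (fun z => γ z * g z) (volume.restrict (Metric.ball (0:ℂ) 1)) := by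
    have := hγint.bdd_mul (c := (i:ℝ) * j)
      (hgcont.aestronglyMeasurable.restrict) hbound
    simpa [mul_comm] using this
  set G : ℂ → ℝ := (Metric.ball (0:ℂ) 1).indicator (fun z => γ z * g z) with hGdef
  have hGint : Integrable G := (integrable_indicator_iff measurableSet_ball).2 hint
  set F : ℝ × ℝ → ℝ := fun p =>
    (Ioo (0:ℝ) 1).indicator (fun s => s ^ (i + j - 1)) p.1 *
      ((i:ℝ) * (j:ℝ) * (γ ((p.1:ℂ) * Complex.exp (Complex.I * p.2)) * Real.cos (k * p.2))) with hFdef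
  have heq : ∀ p ∈ polarCoord.target, p.1 • G (Complex.polarCoord.symm p) = F p := by
    rintro ⟨r, θ⟩ hp
    rw [polarCoord_target] at hp
    have hr : (0:ℝ) < r := hp.1
    have hz : Complex.polarCoord.symm (r, θ) = (r:ℂ) * Complex.exp (Complex.I * θ) := by
      rw [Complex.polarCoord_symm_apply, mul_comm Complex.I (θ:ℂ), Complex.exp_mul_I,
        Complex.ofReal_cos, Complex.ofReal_sin]
    have habs : ‖(r:ℂ) * Complex.exp (Complex.I * θ)‖ = r := by
      rw [norm_mul, Complex.norm_real, Real.norm_eq_abs, abs_of_pos hr, mul_comm Complex.I (θ:ℂ),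
        Complex.norm_exp_ofReal_mul_I, mul_one]
    dsimp only
    rw [hz]
    by_cases hr1 : r < 1
    · have hmem : (r:ℂ) * Complex.exp (Complex.I * θ) ∈ Metric.ball (0:ℂ) 1 := by
        rw [Metric.mem_ball, Complex.dist_eq, sub_zero, habs]; exact hr1
      rw [hGdef, hFdef]
      rw [Set.indicator_of_mem hmem]
      simp only
      rw [Set.indicator_of_mem (Set.mem_Ioo.2 ⟨hr, hr1⟩)]
      rw [hg]
      simp only
      rw [polar_pow_conj_pow,
        show ((i-1:ℕ):ℝ) - ((j-1:ℕ):ℝ) = (i:ℝ) - j by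
          rw [Nat.cast_sub hi, Nat.cast_sub hj]; ring,
        cos_sub_natAbs i j θ, ← hkdef,
        show (i-1) + (j-1) = i + j - 2 by omega]
      have hrpow : r * r ^ (i + j - 2) = r ^ (i + j - 1) := by
        rw [← pow_succ']; congr 1; omega
      rw [smul_eq_mul]
      linear_combination (γ ((r:ℂ) * Complex.exp (Complex.I * θ)) * ((i:ℝ) * (j:ℝ) *
        Real.cos ((k:ℝ) * θ))) * hrpow
    · have hnmem : (r:ℂ) * Complex.exp (Complex.I * θ) ∉ Metric.ball (0:ℂ) 1 := by
        rw [Metric.mem_ball, Complex.dist_eq, sub_zero, habs]; exact fun h => hr1 h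
      have hnotIoo : r ∉ Ioo (0:ℝ) 1 := fun h => hr1 h.2
      simp [hGdef, hFdef, Set.indicator_apply, hnmem, hnotIoo, hr1]
  have hFint : IntegrableOn F polarCoord.target :=
    (integrableOn_polar_complex hGint).congr_fun heq polarCoord.open_target.measurableSet
  have step1 : ∫ z in Metric.ball (0:ℂ) 1, γ z * g z = ∫ p in polarCoord.target, F p := by
    rw [← integral_indicator measurableSet_ball, ← hGdef,
      ← Complex.integral_comp_polarCoord_symm G]
    exact setIntegral_congr_fun polarCoord.open_target.measurableSet heq
  have step2 : (∫ p in polarCoord.target, F p)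
      = ∫ r in Ioi (0:ℝ), ∫ θ in Ioo (-π) π, F (r, θ) := by
    rw [polarCoord_target, Measure.volume_eq_prod]
    apply setIntegral_prod
    rw [← Measure.volume_eq_prod, ← polarCoord_target]
    exact hFint
  have hπ : (π:ℝ) ≠ 0 := Real.pi_ne_zero
  have hper : ∀ r : ℝ, (∫ θ in Ioo (-π) π,
        γ ((r:ℂ) * Complex.exp (Complex.I * θ)) * Real.cos (k * θ))
      = π * (if i = j then 2 else 1) * fourierCosCoeff γ k r := by
    intro r
    have hperiodic : Function.Periodic
        (fun θ : ℝ => γ ((r:ℂ) * Complex.exp (Complex.I * θ)) * Real.cos (k * θ)) (2*π) := by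
      intro θ
      simp only
      have h1 : Complex.exp (Complex.I * ((θ + 2*π : ℝ) : ℂ)) = Complex.exp (Complex.I * θ) := by
        push_cast
        rw [mul_add, Complex.exp_add, mul_comm Complex.I (2*(π:ℂ)), Complex.exp_two_pi_mul_I,
          mul_one]
      have h2 : Real.cos ((k:ℝ) * (θ + 2*π)) = Real.cos ((k:ℝ) * θ) := by
        have h3 := Real.cos_add_nat_mul_two_pi ((k:ℝ)*θ) k
        rw [mul_add]
        convert h3 using 2
      rw [h1, h2]
    calc (∫ θ in Ioo (-π) π, γ ((r:ℂ) * Complex.exp (Complex.I * θ)) * Real.cos (k * θ))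
        = ∫ θ in Set.Ioc (-π) π, γ ((r:ℂ) * Complex.exp (Complex.I * θ)) * Real.cos (k * θ) :=
          (MeasureTheory.integral_Ioc_eq_integral_Ioo).symm
      _ = ∫ θ in (-π)..π, γ ((r:ℂ) * Complex.exp (Complex.I * θ)) * Real.cos (k * θ) :=
          (intervalIntegral.integral_of_le (by linarith [Real.pi_pos])).symm
      _ = ∫ θ in (0:ℝ)..(2*π), γ ((r:ℂ) * Complex.exp (Complex.I * θ)) * Real.cos (k * θ) := by
          have h := hperiodic.intervalIntegral_add_eq (-π) 0
          rw [show -π + 2*π = π by ring, zero_add] at h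
          exact h
      _ = π * (if i = j then 2 else 1) * fourierCosCoeff γ k r := by
          by_cases hij : i = j
          · have hk0 : k = 0 := by rw [hkdef, hij]; simp
            rw [hk0]
            simp only [Nat.cast_zero, zero_mul, Real.cos_zero, mul_one]
            rw [if_pos hij, fourierCosCoeff, if_pos rfl]
            field_simp
          · have hk0 : k ≠ 0 := by
              rw [hkdef]
              omega
            rw [if_neg hij, fourierCosCoeff, if_neg hk0]
            field_simp
  have hinner : ∀ r : ℝ, (∫ θ in Ioo (-π) π, F (r, θ))
      = (Ioo (0:ℝ) 1).indicator
          (fun s => s ^ (i+j-1) *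
            ((i:ℝ) * (j:ℝ) * (π * (if i = j then 2 else 1) * fourierCosCoeff γ k s))) r := by
    intro r
    have hFr : ∀ θ : ℝ, F (r, θ)
        = ((Ioo (0:ℝ) 1).indicator (fun s => s ^ (i+j-1)) r * ((i:ℝ)*(j:ℝ))) *
            (γ ((r:ℂ) * Complex.exp (Complex.I * θ)) * Real.cos (k * θ)) := by
      intro θ; rw [hFdef]; ring
    rw [MeasureTheory.integral_congr_ae (Filter.Eventually.of_forall hFr),
      MeasureTheory.integral_const_mul, hper r]
    by_cases h : r ∈ Ioo (0:ℝ) 1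
    · rw [Set.indicator_of_mem h, Set.indicator_of_mem h]; ring
    · rw [Set.indicator_of_notMem h, Set.indicator_of_notMem h]; ring
  rw [step1, step2]
  rw [MeasureTheory.setIntegral_congr_fun measurableSet_Ioi (fun r _ => hinner r),
    MeasureTheory.setIntegral_indicator measurableSet_Ioo,
    Set.inter_eq_self_of_subset_right Set.Ioo_subset_Ioi_self,
    ← MeasureTheory.integral_Ioc_eq_integral_Ioo,
    ← intervalIntegral.integral_of_le zero_le_one]
  rw [show (fun r : ℝ => r ^ (i+j-1) *
        ((i:ℝ) * (j:ℝ) * (π * (if i = j then 2 else 1) * fourierCosCoeff γ k r)))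
      = (fun r : ℝ => ((i:ℝ) * (j:ℝ) * (π * (if i = j then 2 else 1))) *
          (r ^ (i+j-1) * fourierCosCoeff γ k r)) from funext fun r => by ring]
  rw [intervalIntegral.integral_const_mul]
  ring
/-- for `γ ∈ L²` of the unit disk and `i, j ≥ 1`,
`∫_Ω γ ⟨∇Re(z^i), ∇Re(z^j)⟩ = ∫_Ω γ ⟨∇Im(z^i), ∇Im(z^j)⟩
  = i j π ζ_{i,j} ∫₀¹ r^{i+j-1} a_{|i-j|}(r) dr`. -/
theorem linearized_DtN_cos_cos_sin_sin (γ : ℂ → ℝ)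
    (hγ : MemLp γ 2 (volume.restrict (Metric.ball (0:ℂ) 1)))
    (i j : ℕ) (hi : 1 ≤ i) (hj : 1 ≤ j) :
    (∫ z in Metric.ball (0:ℂ) 1,
        γ z * ⟪gradient (fun w : ℂ => (w ^ i).re) z,
               gradient (fun w : ℂ => (w ^ j).re) z⟫)
      = (i : ℝ) * j * π * (if i = j then 2 else 1) *
          ∫ r in (0:ℝ)..1, r ^ (i + j - 1) * fourierCosCoeff γ ((i : ℤ) - j).natAbs r
    ∧
    (∫ z in Metric.ball (0:ℂ) 1,
        γ z * ⟪gradient (fun w : ℂ => (w ^ i).im) z,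
               gradient (fun w : ℂ => (w ^ j).im) z⟫)
      = (i : ℝ) * j * π * (if i = j then 2 else 1) *
          ∫ r in (0:ℝ)..1, r ^ (i + j - 1) * fourierCosCoeff γ ((i : ℤ) - j).natAbs r := by
  have h := main_core γ hγ i j hi hj
  constructor
  · simp only [grad_re_inner]
    exact h
  · simp only [grad_im_inner]
    exact h
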